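/- arXiv:2506.15997 — 3 statements merged into one kernel-verified Lean document; each statement's English description precedes it below -/
import Mathlib

section
/- Let G be a connected bridgeless graph with at least one edge, and let G' be the graph obtained from G by subdividing one edge (replacing an edge uv by a path u w v through a new vertex w). Then G' is connected and bridgeless, and the oriented diameter of G' is at least the oriented diameter of G. -/
open SimpleGraph

variable {V : Type*}

/-- A graph is bridgeless if no edge is a bridge. -/
def IsBridgeless (G : SimpleGraph V) : Prop := ∀ e : Sym2 V, ¬ G.IsBridge e

/-- `R` is an orientation of `G`: every arc of `R` is an edge of `G`, every edge of `G`
receives exactly one direction. -/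
def IsOrientation (G : SimpleGraph V) (R : V → V → Prop) : Prop :=
  (∀ u v, R u v → G.Adj u v) ∧ (∀ u v, G.Adj u v → (R u v ∨ R v u)) ∧
  (∀ u v, R u v → ¬ R v u)

/-- There is a directed walk of length `n` from `u` to `v` along the relation `R`. -/
def HasDirWalk (R : V → V → Prop) (u v : V) (n : ℕ) : Prop :=
  ∃ f : Fin (n + 1) → V, f 0 = u ∧ f (Fin.last n) = v ∧
    ∀ i : Fin n, R (f i.castSucc) (f i.succ)

/-- `R` is strongly connected. -/
def IsStrong (R : V → V → Prop) : Prop := ∀ u v : V, ∃ n, HasDirWalk R u v n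

/-- `R` is strongly connected within the vertex set `W`. -/
def IsStrongOn (R : V → V → Prop) (W : Set V) : Prop :=
  ∀ u ∈ W, ∀ v ∈ W, ∃ n, HasDirWalk R u v n

/-- Directed distance `∂(u,v)`: length of a shortest directed path from `u` to `v`. -/
noncomputable def ddist (R : V → V → Prop) (u v : V) : ℕ := sInf {n | HasDirWalk R u v n}

/-- `θ(u,v) = max{∂(u,v), ∂(v,u)}`. -/
noncomputable def theta (R : V → V → Prop) (u v : V) : ℕ := max (ddist R u v) (ddist R v u)

/-- The diameter of a (strong) orientation. -/
noncomputable def diamOr [Fintype V] (R : V → V → Prop) : ℕ :=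
  Finset.univ.sup fun p : V × V => theta R p.1 p.2

/-- The oriented diameter of `G`. -/
noncomputable def orientedDiam [Fintype V] (G : SimpleGraph V) : ℕ :=
  sInf {d | ∃ R : V → V → Prop, IsOrientation G R ∧ IsStrong R ∧ diamOr R = d}

/-- `A` is the arc set of a strongly connected subdigraph of `R` containing `u` and `v`. -/
def IsStrongSubOn (R : V → V → Prop) (u v : V) (A : Set (V × V)) : Prop :=
  (∀ p ∈ A, R p.1 p.2) ∧
  (∀ x ∈ insert u (insert v (Prod.fst '' A ∪ Prod.snd '' A)),
   ∀ y ∈ insert u (insert v (Prod.fst '' A ∪ Prod.snd '' A)),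
     Relation.ReflTransGen (fun a b => (a, b) ∈ A) x y)

/-- Strong distance `sd(u,v)`: minimum number of arcs of a strong subdigraph containing
`u` and `v`. -/
noncomputable def sdist (R : V → V → Prop) (u v : V) : ℕ :=
  sInf {n | ∃ A : Set (V × V), A.Finite ∧ A.ncard = n ∧ IsStrongSubOn R u v A}

/-- The strong diameter of a (strong) orientation. -/
noncomputable def sdiamOr [Fintype V] (R : V → V → Prop) : ℕ :=
  Finset.univ.sup fun p : V × V => sdist R p.1 p.2

/-- The oriented strong diameter of `G`. -/
noncomputable def orientedSDiam [Fintype V] (G : SimpleGraph V) : ℕ :=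
  sInf {d | ∃ R : V → V → Prop, IsOrientation G R ∧ IsStrong R ∧ sdiamOr R = d}

/-- `D` is a dominating set of `G`. -/
def IsDominating (G : SimpleGraph V) (D : Set V) : Prop :=
  ∀ v ∉ D, ∃ u ∈ D, G.Adj u v

/-- The domination number of `G`. -/
noncomputable def dominationNumber [Fintype V] (G : SimpleGraph V) : ℕ :=
  sInf {n | ∃ D : Set V, D.ncard = n ∧ IsDominating G D}

/-- `v` is associated with an isolated triangle. -/
def HasIsolatedTriangle (G : SimpleGraph V) (v : V) : Prop :=
  ∃ v₁ v₂ : V, G.Adj v v₁ ∧ G.Adj v₁ v₂ ∧ G.Adj v₂ v ∧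
    (G.neighborSet v₁).ncard = 2 ∧ (G.neighborSet v₂).ncard = 2

/-- `(G, D)` is a standard pair. -/
def IsStandardPair (G : SimpleGraph V) (D : Set V) : Prop :=
  IsBridgeless G ∧
  (∀ u ∈ D, ∀ v ∈ D, ¬ G.Adj u v) ∧
  (∀ v ∉ D, ∃! u, u ∈ D ∧ G.Adj u v) ∧
  (∀ v ∈ D, HasIsolatedTriangle G v)

/-- `H` is an alternative subgraph of `G` with respect to the dominating set `D`. -/
def IsAlternative (G : SimpleGraph V) (D : Set V) (H : G.Subgraph) : Prop :=
  IsBridgeless H.coe ∧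
  (H.verts ∩ D).Nonempty ∧
  (∀ x ∈ H.verts ∩ D, ∃ a b : V, a ≠ b ∧ a ∉ D ∧ b ∉ D ∧ H.Adj x a ∧ H.Adj x b ∧
    ∀ c, c ∉ D → H.Adj x c → c = a ∨ c = b) ∧
  (∀ y ∈ H.verts, y ∉ D → ∃ x ∈ H.verts ∩ D, H.Adj x y)

/-- `d_i(H⃗)`: maximum of `θ(u,v)` over pairs `u, v ∈ W` with `|{u,v} ∩ D| = i`. -/
noncomputable def dPairs (R : V → V → Prop) (W D : Set V) (i : ℕ) : ℕ :=
  sSup {k | ∃ u ∈ W, ∃ v ∈ W, ({u, v} ∩ D).ncard = i ∧ theta R u v = k}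

/-- `m(H⃗) = max{d₀ − 2, d₁ − 1, d₂}`. -/
noncomputable def mOf (R : V → V → Prop) (W D : Set V) : ℕ :=
  max (dPairs R W D 0 - 2) (max (dPairs R W D 1 - 1) (dPairs R W D 2))

/-- The graph obtained from `G` by subdividing the edge `uv` with a new vertex `none`. -/
def subdivide (G : SimpleGraph V) (u v : V) : SimpleGraph (Option V) :=
  SimpleGraph.fromRel fun a b =>
    match a, b with
    | some x, some y => G.Adj x y ∧ ¬(x = u ∧ y = v) ∧ ¬(x = v ∧ y = u)
    | some x, none => x = u ∨ x = v
    | none, _ => False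

/-- The graph obtained from `G` by attaching a pendant triangle at `v`. -/
def pendantTriangle (G : SimpleGraph V) (v : V) : SimpleGraph (V ⊕ Fin 2) :=
  SimpleGraph.fromRel fun a b =>
    match a, b with
    | Sum.inl x, Sum.inl y => G.Adj x y
    | Sum.inl x, Sum.inr _ => x = v
    | Sum.inr _, Sum.inl _ => False
    | Sum.inr i, Sum.inr j => i ≠ j

/-- `G` has a Hamiltonian path with endpoints `u` and `v`. -/
def HasHamiltonianPathBetween (G : SimpleGraph V) (u v : V) : Prop :=
  ∃ p : G.Walk u v, p.IsPath ∧ ∀ w : V, w ∈ p.support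

section Aux

lemma hasDirWalk_zero {R : V → V → Prop} {u v : V} : HasDirWalk R u v 0 ↔ u = v := by
  constructor
  · rintro ⟨f, h0, hl, -⟩
    have h1 : (Fin.last 0 : Fin 1) = 0 := rfl
    rw [← h0, ← hl, h1]
  · rintro rfl
    exact ⟨fun _ => u, rfl, rfl, fun i => i.elim0⟩

lemma hasDirWalk_cons {R : V → V → Prop} {u w v : V} {n : ℕ}
    (h : R u w) (hw : HasDirWalk R w v n) : HasDirWalk R u v (n + 1) := by
  obtain ⟨g, hg0, hgl, hgs⟩ := hw
  refine ⟨Fin.cons u g, by simp, ?_, ?_⟩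
  · rw [← Fin.succ_last, Fin.cons_succ]
    exact hgl
  · intro i
    refine Fin.cases ?_ (fun j => ?_) i
    · simpa [hg0] using h
    · rw [← Fin.succ_castSucc, Fin.cons_succ, Fin.cons_succ]
      exact hgs j

lemma hasDirWalk_destruct {R : V → V → Prop} {u v : V} {n : ℕ}
    (h : HasDirWalk R u v (n + 1)) : ∃ w, R u w ∧ HasDirWalk R w v n := by
  obtain ⟨f, h0, hl, hs⟩ := h
  refine ⟨f (Fin.succ 0), ?_, fun i => f i.succ, rfl, ?_, fun i => ?_⟩
  · have := hs 0
    rwa [Fin.castSucc_zero, h0] at this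
  · show f (Fin.last n).succ = v
    rw [Fin.succ_last]
    exact hl
  · show R (f i.castSucc.succ) (f i.succ.succ)
    rw [Fin.succ_castSucc]
    exact hs i.succ

lemma hasDirWalk_snoc {R : V → V → Prop} {u w v : V} {n : ℕ}
    (h : HasDirWalk R u w n) (h2 : R w v) : HasDirWalk R u v (n + 1) := by
  induction n generalizing u with
  | zero =>
    rw [hasDirWalk_zero] at h
    subst h
    exact hasDirWalk_cons h2 (hasDirWalk_zero.2 rfl)
  | succ n ih =>
    obtain ⟨z, hz, hw⟩ := hasDirWalk_destruct h
    exact hasDirWalk_cons hz (ih hw)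

lemma hasDirWalk_destruct_last {R : V → V → Prop} {u v : V} {n : ℕ}
    (h : HasDirWalk R u v (n + 1)) : ∃ w, HasDirWalk R u w n ∧ R w v := by
  induction n generalizing u with
  | zero =>
    obtain ⟨w, hw, h0⟩ := hasDirWalk_destruct h
    rw [hasDirWalk_zero] at h0
    subst h0
    exact ⟨u, hasDirWalk_zero.2 rfl, hw⟩
  | succ n ih =>
    obtain ⟨z, hz, hw⟩ := hasDirWalk_destruct h
    obtain ⟨w, hw1, hw2⟩ := ih hw
    exact ⟨w, hasDirWalk_cons hz hw1, hw2⟩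

lemma subdivide_adj_some_some {G : SimpleGraph V} {u v x y : V} :
    (subdivide G u v).Adj (some x) (some y) ↔
      G.Adj x y ∧ ¬(x = u ∧ y = v) ∧ ¬(x = v ∧ y = u) := by
  rw [subdivide, fromRel_adj]
  constructor
  · rintro ⟨hne, h | h⟩
    · exact h
    · exact ⟨h.1.symm, fun hc => h.2.2 ⟨hc.2, hc.1⟩, fun hc => h.2.1 ⟨hc.2, hc.1⟩⟩
  · rintro ⟨ha, h1, h2⟩
    exact ⟨by simpa using ha.ne, Or.inl ⟨ha, h1, h2⟩⟩

lemma subdivide_adj_none {G : SimpleGraph V} {u v : V} {a : Option V} :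
    (subdivide G u v).Adj a none ↔ a = some u ∨ a = some v := by
  rw [subdivide, fromRel_adj]
  cases a with
  | none => simp
  | some x => simp [eq_comm]

lemma subdivide_adj_none' {G : SimpleGraph V} {u v : V} {a : Option V} :
    (subdivide G u v).Adj none a ↔ a = some u ∨ a = some v := by
  rw [adj_comm]
  exact subdivide_adj_none

def collapseRel (G : SimpleGraph V) (u v : V) (R' : Option V → Option V → Prop) :
    V → V → Prop :=
  fun x y => R' (some x) (some y) ∨
    (x = u ∧ y = v ∧ R' (some u) none ∧ R' none (some v)) ∨
    (x = v ∧ y = u ∧ R' (some v) none ∧ R' none (some u))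

section Collapse

variable {G : SimpleGraph V} {u v : V} {R' : Option V → Option V → Prop}

lemma collapse_orientation (huv : G.Adj u v)
    (ho : IsOrientation (subdivide G u v) R') (hs : IsStrong R') :
    IsOrientation G (collapseRel G u v R') := by
  have hne : u ≠ v := huv.ne
  have hnadj1 : ¬ R' (some u) (some v) := fun h => by
    have := ho.1 _ _ h
    rw [subdivide_adj_some_some] at this
    exact this.2.1 ⟨rfl, rfl⟩
  have hnadj2 : ¬ R' (some v) (some u) := fun h => by
    have := ho.1 _ _ h
    rw [subdivide_adj_some_some] at this
    exact this.2.2 ⟨rfl, rfl⟩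
  -- there is an out-arc and an in-arc at none
  have hout : ∃ w, R' none w := by
    obtain ⟨n, hw⟩ := hs none (some u)
    cases n with
    | zero => exact absurd (hasDirWalk_zero.1 hw) (by simp)
    | succ n =>
      obtain ⟨w, hw1, -⟩ := hasDirWalk_destruct hw
      exact ⟨w, hw1⟩
  have hin : ∃ w, R' w none := by
    obtain ⟨n, hw⟩ := hs (some u) none
    cases n with
    | zero => exact absurd (hasDirWalk_zero.1 hw) (by simp)
    | succ n =>
      obtain ⟨w, -, hw2⟩ := hasDirWalk_destruct_last hw
      exact ⟨w, hw2⟩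
  -- the key orientation dichotomy at none
  have hkey : (R' (some u) none ∧ R' none (some v)) ∨
      (R' (some v) none ∧ R' none (some u)) := by
    obtain ⟨w1, hw1⟩ := hout
    obtain ⟨w2, hw2⟩ := hin
    have hw1m : w1 = some u ∨ w1 = some v := by
      have := ho.1 _ _ hw1
      rwa [subdivide_adj_none'] at this
    have hw2m : w2 = some u ∨ w2 = some v := by
      have := ho.1 _ _ hw2
      rwa [subdivide_adj_none] at this
    have hne12 : w1 ≠ w2 := by
      rintro rfl
      exact ho.2.2 _ _ hw1 hw2
    rcases hw1m with rfl | rfl <;> rcases hw2m with rfl | rfl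
    · exact absurd rfl hne12
    · exact Or.inr ⟨hw2, hw1⟩
    · exact Or.inl ⟨hw2, hw1⟩
    · exact absurd rfl hne12
  refine ⟨?_, ?_, ?_⟩
  · rintro x y (h | ⟨rfl, rfl, -⟩ | ⟨rfl, rfl, -⟩)
    · exact (subdivide_adj_some_some.1 (ho.1 _ _ h)).1
    · exact huv
    · exact huv.symm
  · intro x y hxy
    by_cases hp : (x = u ∧ y = v) ∨ (x = v ∧ y = u)
    · rcases hp with ⟨rfl, rfl⟩ | ⟨rfl, rfl⟩
      · rcases hkey with h | h
        · exact Or.inl (Or.inr (Or.inl ⟨rfl, rfl, h⟩))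
        · exact Or.inr (Or.inr (Or.inr ⟨rfl, rfl, h⟩))
      · rcases hkey with h | h
        · exact Or.inr (Or.inr (Or.inl ⟨rfl, rfl, h⟩))
        · exact Or.inl (Or.inr (Or.inr ⟨rfl, rfl, h⟩))
    · push_neg at hp
      have hadj : (subdivide G u v).Adj (some x) (some y) :=
        subdivide_adj_some_some.2 ⟨hxy, fun hc => (hp.1 hc.1 hc.2).elim,
          fun hc => (hp.2 hc.1 hc.2).elim⟩
      rcases ho.2.1 _ _ hadj with h | h
      · exact Or.inl (Or.inl h)
      · exact Or.inr (Or.inl h)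
  · rintro x y (h1 | ⟨rfl, rfl, h1a, h1b⟩ | ⟨rfl, rfl, h1a, h1b⟩)
      (h2 | ⟨he1, he2, h2a, h2b⟩ | ⟨he1, he2, h2a, h2b⟩)
    · exact ho.2.2 _ _ h1 h2
    · subst he1; subst he2; exact hnadj2 h1
    · subst he1; subst he2; exact hnadj1 h1
    · exact hnadj2 h2
    · exact hne he1.symm
    · exact ho.2.2 _ _ h1a h2b
    · exact hnadj1 h2
    · exact ho.2.2 _ _ h1a h2b
    · exact hne he1

lemma collapse_walk (huv : G.Adj u v) (ho : IsOrientation (subdivide G u v) R') :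
    ∀ n x y, HasDirWalk R' (some x) (some y) n →
      ∃ m ≤ n, HasDirWalk (collapseRel G u v R') x y m := by
  intro n
  induction n using Nat.strong_induction_on with
  | _ n ih =>
    intro x y h
    cases n with
    | zero =>
      refine ⟨0, le_refl 0, hasDirWalk_zero.2 ?_⟩
      exact Option.some_injective _ (hasDirWalk_zero.1 h)
    | succ n =>
      obtain ⟨w, hw, hwalk⟩ := hasDirWalk_destruct h
      cases w with
      | some z =>
        obtain ⟨m, hm, hwalk'⟩ := ih n (Nat.lt_succ_self n) z y hwalk
        exact ⟨m + 1, by omega, hasDirWalk_cons (Or.inl hw) hwalk'⟩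
      | none =>
        cases n with
        | zero => exact absurd (hasDirWalk_zero.1 hwalk) (by simp)
        | succ n' =>
          obtain ⟨w', hw', hwalk2⟩ := hasDirWalk_destruct hwalk
          have hw'm : w' = some u ∨ w' = some v := by
            have := ho.1 _ _ hw'
            rwa [subdivide_adj_none'] at this
          have hxm : x = u ∨ x = v := by
            have := ho.1 _ _ hw
            rw [subdivide_adj_none] at this
            simpa using this
          have hxw : some x ≠ w' := by
            rintro rfl
            exact ho.2.2 _ _ hw hw'
          obtain ⟨z, rfl⟩ : ∃ z, w' = some z := by
            rcases hw'm with rfl | rfl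
            exacts [⟨u, rfl⟩, ⟨v, rfl⟩]
          have hR : collapseRel G u v R' x z := by
            rcases hxm with rfl | rfl <;> rcases hw'm with hz | hz <;>
              simp only [Option.some.injEq] at hz
            · exact absurd (congrArg some hz.symm) hxw
            · subst hz; exact Or.inr (Or.inl ⟨rfl, rfl, hw, hw'⟩)
            · subst hz; exact Or.inr (Or.inr ⟨rfl, rfl, hw, hw'⟩)
            · exact absurd (congrArg some hz.symm) hxw
          obtain ⟨m, hm, hwalk3⟩ := ih n' (by omega) z y hwalk2
          exact ⟨m + 1, by omega, hasDirWalk_cons hR hwalk3⟩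

lemma collapse_strong (huv : G.Adj u v) (ho : IsOrientation (subdivide G u v) R')
    (hs : IsStrong R') : IsStrong (collapseRel G u v R') := by
  intro x y
  obtain ⟨n, hw⟩ := hs (some x) (some y)
  obtain ⟨m, -, hw'⟩ := collapse_walk huv ho n x y hw
  exact ⟨m, hw'⟩

lemma collapse_ddist (huv : G.Adj u v) (ho : IsOrientation (subdivide G u v) R')
    (hs : IsStrong R') (x y : V) :
    ddist (collapseRel G u v R') x y ≤ ddist R' (some x) (some y) := by
  have hne : {n | HasDirWalk R' (some x) (some y) n}.Nonempty := hs (some x) (some y)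
  have hmem := Nat.sInf_mem hne
  obtain ⟨m, hm, hw⟩ := collapse_walk huv ho _ x y hmem
  exact le_trans (Nat.sInf_le hw) hm

lemma collapse_diam [Fintype V] (huv : G.Adj u v) (ho : IsOrientation (subdivide G u v) R')
    (hs : IsStrong R') : diamOr (collapseRel G u v R') ≤ diamOr R' := by
  apply Finset.sup_le
  intro p _
  have h1 : theta (collapseRel G u v R') p.1 p.2 ≤ theta R' (some p.1) (some p.2) :=
    max_le_max (collapse_ddist huv ho hs p.1 p.2) (collapse_ddist huv ho hs p.2 p.1)
  exact le_trans h1 (Finset.le_sup (f := fun q : Option V × Option V => theta R' q.1 q.2)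
    (Finset.mem_univ (some p.1, some p.2)))

end Collapse

def expandRel (G : SimpleGraph V) (u v : V) (R : V → V → Prop) :
    Option V → Option V → Prop :=
  fun a b =>
    match a, b with
    | some x, some y => R x y ∧ ¬(x = u ∧ y = v) ∧ ¬(x = v ∧ y = u)
    | some x, none => (x = u ∧ R u v) ∨ (x = v ∧ R v u)
    | none, some y => (y = v ∧ R u v) ∨ (y = u ∧ R v u)
    | none, none => False

section Expand

variable {G : SimpleGraph V} {u v : V} {R : V → V → Prop}

lemma expandRel_some_some {x y : V} :
    expandRel G u v R (some x) (some y) ↔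
      R x y ∧ ¬(x = u ∧ y = v) ∧ ¬(x = v ∧ y = u) := Iff.rfl

lemma expandRel_some_none {x : V} :
    expandRel G u v R (some x) none ↔ (x = u ∧ R u v) ∨ (x = v ∧ R v u) := Iff.rfl

lemma expandRel_none_some {y : V} :
    expandRel G u v R none (some y) ↔ (y = v ∧ R u v) ∨ (y = u ∧ R v u) := Iff.rfl

lemma expand_orientation (huv : G.Adj u v) (ho : IsOrientation G R) :
    IsOrientation (subdivide G u v) (expandRel G u v R) := by
  have hne : u ≠ v := huv.ne
  refine ⟨?_, ?_, ?_⟩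
  · intro a b h
    match a, b with
    | some x, some y => exact subdivide_adj_some_some.2 ⟨ho.1 _ _ h.1, h.2.1, h.2.2⟩
    | some x, none =>
      refine subdivide_adj_none.2 ?_
      rcases h with ⟨rfl, -⟩ | ⟨rfl, -⟩
      exacts [Or.inl rfl, Or.inr rfl]
    | none, some y =>
      refine subdivide_adj_none'.2 ?_
      rcases h with ⟨rfl, -⟩ | ⟨rfl, -⟩
      exacts [Or.inr rfl, Or.inl rfl]
    | none, none => exact h.elim
  · intro a b hab
    match a, b with
    | some x, some y =>
      rw [subdivide_adj_some_some] at hab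
      rcases ho.2.1 _ _ hab.1 with h | h
      · exact Or.inl ⟨h, hab.2.1, hab.2.2⟩
      · exact Or.inr ⟨h, fun hc => hab.2.2 ⟨hc.2, hc.1⟩, fun hc => hab.2.1 ⟨hc.2, hc.1⟩⟩
    | some x, none =>
      rw [subdivide_adj_none] at hab
      rcases hab with h | h <;> simp only [Option.some.injEq] at h <;>
        rcases ho.2.1 _ _ huv with hr | hr
      · exact Or.inl (expandRel_some_none.2 (Or.inl ⟨h, hr⟩))
      · exact Or.inr (expandRel_none_some.2 (Or.inr ⟨h, hr⟩))
      · exact Or.inr (expandRel_none_some.2 (Or.inl ⟨h, hr⟩))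
      · exact Or.inl (expandRel_some_none.2 (Or.inr ⟨h, hr⟩))
    | none, some y =>
      rw [subdivide_adj_none'] at hab
      rcases hab with h | h <;> simp only [Option.some.injEq] at h <;>
        rcases ho.2.1 _ _ huv with hr | hr
      · exact Or.inr (expandRel_some_none.2 (Or.inl ⟨h, hr⟩))
      · exact Or.inl (expandRel_none_some.2 (Or.inr ⟨h, hr⟩))
      · exact Or.inl (expandRel_none_some.2 (Or.inl ⟨h, hr⟩))
      · exact Or.inr (expandRel_some_none.2 (Or.inr ⟨h, hr⟩))
    | none, none => exact (hab.ne rfl).elim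
  · intro a b h1 h2
    match a, b with
    | some x, some y => exact ho.2.2 _ _ h1.1 h2.1
    | some x, none =>
      rcases h1 with ⟨he1, hr1⟩ | ⟨he1, hr1⟩ <;>
        rcases h2 with ⟨he2, hr2⟩ | ⟨he2, hr2⟩
      · exact hne (he1.symm.trans he2)
      · exact ho.2.2 _ _ hr1 hr2
      · exact ho.2.2 _ _ hr1 hr2
      · exact hne (he2.symm.trans he1)
    | none, some y =>
      rcases h1 with ⟨he1, hr1⟩ | ⟨he1, hr1⟩ <;>
        rcases h2 with ⟨he2, hr2⟩ | ⟨he2, hr2⟩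
      · exact hne (he2.symm.trans he1)
      · exact ho.2.2 _ _ hr1 hr2
      · exact ho.2.2 _ _ hr2 hr1
      · exact hne (he1.symm.trans he2)
    | none, none => exact h1.elim

lemma expand_walk (huv : G.Adj u v) :
    ∀ n x y, HasDirWalk R x y n →
      ∃ m, HasDirWalk (expandRel G u v R) (some x) (some y) m := by
  intro n
  induction n with
  | zero =>
    intro x y h
    rw [hasDirWalk_zero] at h
    subst h
    exact ⟨0, hasDirWalk_zero.2 rfl⟩
  | succ n ih =>
    intro x y h
    obtain ⟨w, hw, hwalk⟩ := hasDirWalk_destruct h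
    obtain ⟨m, hm⟩ := ih w y hwalk
    by_cases h1 : x = u ∧ w = v
    · refine ⟨m + 2, hasDirWalk_cons (expandRel_some_none.2 (Or.inl ⟨h1.1, ?_⟩))
        (hasDirWalk_cons (expandRel_none_some.2 (Or.inl ⟨h1.2, ?_⟩)) hm)⟩ <;>
        rw [← h1.1, ← h1.2] <;> exact hw
    · by_cases h2 : x = v ∧ w = u
      · refine ⟨m + 2, hasDirWalk_cons (expandRel_some_none.2 (Or.inr ⟨h2.1, ?_⟩))
          (hasDirWalk_cons (expandRel_none_some.2 (Or.inr ⟨h2.2, ?_⟩)) hm)⟩ <;>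
          rw [← h2.1, ← h2.2] <;> exact hw
      · exact ⟨m + 1, hasDirWalk_cons (expandRel_some_some.2 ⟨hw, h1, h2⟩) hm⟩

lemma expand_strong (huv : G.Adj u v) (ho : IsOrientation G R) (hs : IsStrong R) :
    IsStrong (expandRel G u v R) := by
  have hcase : R u v ∨ R v u := ho.2.1 _ _ huv
  intro a b
  match a, b with
  | some x, some y =>
    obtain ⟨n, hw⟩ := hs x y
    exact expand_walk huv n x y hw
  | none, none => exact ⟨0, hasDirWalk_zero.2 rfl⟩
  | none, some y =>
    rcases hcase with h | h
    · obtain ⟨n, hw⟩ := hs v y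
      obtain ⟨m, hm⟩ := expand_walk huv n v y hw
      exact ⟨m + 1, hasDirWalk_cons (expandRel_none_some.2 (Or.inl ⟨rfl, h⟩)) hm⟩
    · obtain ⟨n, hw⟩ := hs u y
      obtain ⟨m, hm⟩ := expand_walk huv n u y hw
      exact ⟨m + 1, hasDirWalk_cons (expandRel_none_some.2 (Or.inr ⟨rfl, h⟩)) hm⟩
  | some x, none =>
    rcases hcase with h | h
    · obtain ⟨n, hw⟩ := hs x u
      obtain ⟨m, hm⟩ := expand_walk huv n x u hw
      exact ⟨m + 1, hasDirWalk_snoc hm (expandRel_some_none.2 (Or.inl ⟨rfl, h⟩))⟩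
    · obtain ⟨n, hw⟩ := hs x v
      obtain ⟨m, hm⟩ := expand_walk huv n x v hw
      exact ⟨m + 1, hasDirWalk_snoc hm (expandRel_some_none.2 (Or.inr ⟨rfl, h⟩))⟩

end Expand

section ConnBridge

variable {G : SimpleGraph V} {u v : V}

lemma lift_reach {H : SimpleGraph V} {H' : SimpleGraph (Option V)}
    (hadj : ∀ a b, H.Adj a b → H'.Reachable (some a) (some b)) {x y : V}
    (h : H.Reachable x y) : H'.Reachable (some x) (some y) := by
  obtain ⟨w⟩ := h
  induction w with
  | nil => exact Reachable.refl _
  | cons h p ih => exact (hadj _ _ h).trans ih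

lemma subdivide_adj_lift (huv : G.Adj u v) (a b : V) (hab : G.Adj a b) :
    (subdivide G u v).Reachable (some a) (some b) := by
  by_cases h1 : a = u ∧ b = v
  · obtain ⟨rfl, rfl⟩ := h1
    have e1 : (subdivide G a b).Adj (some a) none := subdivide_adj_none.2 (Or.inl rfl)
    have e2 : (subdivide G a b).Adj none (some b) := subdivide_adj_none'.2 (Or.inr rfl)
    exact e1.reachable.trans e2.reachable
  · by_cases h2 : a = v ∧ b = u
    · obtain ⟨rfl, rfl⟩ := h2
      have e1 : (subdivide G b a).Adj (some a) none := subdivide_adj_none.2 (Or.inr rfl)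
      have e2 : (subdivide G b a).Adj none (some b) := subdivide_adj_none'.2 (Or.inl rfl)
      exact e1.reachable.trans e2.reachable
    · exact (subdivide_adj_some_some.2 ⟨hab, h1, h2⟩).reachable

lemma subdivide_connected (huv : G.Adj u v) (hconn : G.Connected) :
    (subdivide G u v).Connected := by
  rw [connected_iff]
  refine ⟨?_, ⟨none⟩⟩
  have key : ∀ x y : V, (subdivide G u v).Reachable (some x) (some y) :=
    fun x y => lift_reach (subdivide_adj_lift huv) (hconn.preconnected x y)
  intro a b
  match a, b with
  | some x, some y => exact key x y
  | none, none => exact Reachable.refl _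
  | some x, none =>
    exact (key x u).trans (Adj.reachable (subdivide_adj_none.2 (Or.inl rfl)))
  | none, some y =>
    exact (Adj.reachable (subdivide_adj_none'.2 (Or.inl rfl))).trans (key u y)

lemma del_uv_lift (huv : G.Adj u v) (x₀ : V) (c d : V)
    (hcd : (G \ fromEdgeSet {s(u, v)}).Adj c d) :
    ((subdivide G u v) \ fromEdgeSet {s(some x₀, (none : Option V))}).Reachable
      (some c) (some d) := by
  rw [sdiff_adj, fromEdgeSet_adj] at hcd
  have hGcd : G.Adj c d := hcd.1
  have hne : s(c, d) ≠ s(u, v) := fun hc => hcd.2 ⟨hc, hGcd.ne⟩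
  have h1 : ¬(c = u ∧ d = v) := fun h => hne (by rw [h.1, h.2])
  have h2 : ¬(c = v ∧ d = u) := fun h => hne (by rw [h.1, h.2, Sym2.eq_swap])
  refine Adj.reachable ?_
  rw [sdiff_adj, fromEdgeSet_adj]
  refine ⟨subdivide_adj_some_some.2 ⟨hGcd, h1, h2⟩, ?_⟩
  rintro ⟨hmem, -⟩
  rw [Set.mem_singleton_iff, Sym2.eq_iff] at hmem
  rcases hmem with ⟨-, h⟩ | ⟨h, -⟩ <;> simp at h

lemma subdivide_del_reach (huv : G.Adj u v) (hbridgeless : IsBridgeless G)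
    {x : V} (hx : x = u ∨ x = v) :
    ((subdivide G u v) \ fromEdgeSet {s(some x, (none : Option V))}).Reachable
      (some x) none := by
  have hre : (G \ fromEdgeSet {s(u, v)}).Reachable u v := by
    have := hbridgeless s(u, v)
    rw [isBridge_iff] at this
    push_neg at this
    exact this
  rcases hx with rfl | rfl
  · refine (lift_reach (del_uv_lift huv x) hre).trans (Adj.reachable ?_)
    rw [sdiff_adj, fromEdgeSet_adj]
    refine ⟨subdivide_adj_none.2 (Or.inr rfl), ?_⟩
    rintro ⟨hmem, -⟩
    rw [Set.mem_singleton_iff, Sym2.eq_iff] at hmem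
    rcases hmem with ⟨h, -⟩ | ⟨h, -⟩
    · exact huv.ne (Option.some_injective _ h).symm
    · simp at h
  · refine (lift_reach (del_uv_lift huv x) hre.symm).trans (Adj.reachable ?_)
    rw [sdiff_adj, fromEdgeSet_adj]
    refine ⟨subdivide_adj_none.2 (Or.inl rfl), ?_⟩
    rintro ⟨hmem, -⟩
    rw [Set.mem_singleton_iff, Sym2.eq_iff] at hmem
    rcases hmem with ⟨h, -⟩ | ⟨h, -⟩
    · exact huv.ne (Option.some_injective _ h)
    · simp at h

lemma subdivide_bridgeless (huv : G.Adj u v) (hbridgeless : IsBridgeless G) :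
    IsBridgeless (subdivide G u v) := by
  have hreach : ∀ x y : V, G.Adj x y → (G \ fromEdgeSet {s(x, y)}).Reachable x y := by
    intro x y hxy
    have := hbridgeless s(x, y)
    rw [isBridge_iff] at this
    push_neg at this
    exact this
  intro e
  induction e using Sym2.ind with
  | _ a b =>
    rw [isBridge_iff]
    intro hnreach
    apply hnreach
    by_cases hadj : (subdivide G u v).Adj a b
    swap
    · have hGc : G.Connected := (connected_iff G).2 ⟨fun x y => by
          have := hbridgeless s(x, y)
          rw [isBridge_iff] at this
          push_neg at this
          exact this.map (SimpleGraph.Hom.ofLE (deleteEdges_le _)), ⟨u⟩⟩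
      rw [deleteEdges_eq_self.2 (Set.disjoint_singleton_right.2 (fun h => hadj ((mem_edgeSet _).1 h)))]
      exact (subdivide_connected huv hGc).preconnected a b
    match a, b with
    | some x, some y =>
      rw [subdivide_adj_some_some] at hadj
      refine lift_reach (H := G \ fromEdgeSet {s(x, y)}) ?_ (hreach x y hadj.1)
      intro c d hcd
      rw [sdiff_adj, fromEdgeSet_adj] at hcd
      have hGcd : G.Adj c d := hcd.1
      have hne : s(c, d) ≠ s(x, y) := fun hc => hcd.2 ⟨hc, hGcd.ne⟩
      by_cases h1 : c = u ∧ d = v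
      · obtain ⟨rfl, rfl⟩ := h1
        have e1 : ((subdivide G c d) \ fromEdgeSet {s(some x, some y)}).Adj
            (some c) none := by
          rw [sdiff_adj, fromEdgeSet_adj]
          refine ⟨subdivide_adj_none.2 (Or.inl rfl), ?_⟩
          rintro ⟨hmem, -⟩
          rw [Set.mem_singleton_iff, Sym2.eq_iff] at hmem
          rcases hmem with ⟨-, h⟩ | ⟨-, h⟩ <;> simp at h
        have e2 : ((subdivide G c d) \ fromEdgeSet {s(some x, some y)}).Adj
            none (some d) := by
          rw [sdiff_adj, fromEdgeSet_adj]
          refine ⟨subdivide_adj_none'.2 (Or.inr rfl), ?_⟩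
          rintro ⟨hmem, -⟩
          rw [Set.mem_singleton_iff, Sym2.eq_iff] at hmem
          rcases hmem with ⟨h, -⟩ | ⟨h, -⟩ <;> simp at h
        exact e1.reachable.trans e2.reachable
      · by_cases h2 : c = v ∧ d = u
        · obtain ⟨rfl, rfl⟩ := h2
          have e1 : ((subdivide G d c) \ fromEdgeSet {s(some x, some y)}).Adj
              (some c) none := by
            rw [sdiff_adj, fromEdgeSet_adj]
            refine ⟨subdivide_adj_none.2 (Or.inr rfl), ?_⟩
            rintro ⟨hmem, -⟩
            rw [Set.mem_singleton_iff, Sym2.eq_iff] at hmem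
            rcases hmem with ⟨-, h⟩ | ⟨-, h⟩ <;> simp at h
          have e2 : ((subdivide G d c) \ fromEdgeSet {s(some x, some y)}).Adj
              none (some d) := by
            rw [sdiff_adj, fromEdgeSet_adj]
            refine ⟨subdivide_adj_none'.2 (Or.inl rfl), ?_⟩
            rintro ⟨hmem, -⟩
            rw [Set.mem_singleton_iff, Sym2.eq_iff] at hmem
            rcases hmem with ⟨h, -⟩ | ⟨h, -⟩ <;> simp at h
          exact e1.reachable.trans e2.reachable
        · refine Adj.reachable ?_
          change ((subdivide G u v) \ fromEdgeSet {s(some x, some y)}).Adj (some c) (some d)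
          rw [sdiff_adj, fromEdgeSet_adj]
          refine ⟨subdivide_adj_some_some.2 ⟨hGcd, h1, h2⟩, ?_⟩
          rintro ⟨hmem, -⟩
          apply hne
          rw [Set.mem_singleton_iff] at hmem
          rw [Sym2.eq_iff] at hmem ⊢
          simp only [Option.some.injEq] at hmem
          exact hmem
    | some x, none =>
      have hx : x = u ∨ x = v := by
        have := subdivide_adj_none.1 hadj
        simpa using this
      exact subdivide_del_reach huv hbridgeless hx
    | none, some y =>
      have hy : y = u ∨ y = v := by
        have := subdivide_adj_none'.1 hadj
        simpa using this
      have hswap : s((none : Option V), some y) = s(some y, (none : Option V)) :=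
        Sym2.eq_swap
      rw [hswap]
      exact (subdivide_del_reach huv hbridgeless hy).symm
    | none, none => exact (hadj.ne rfl).elim

end ConnBridge


end Aux

/-- Subdividing an edge of a connected bridgeless graph keeps it connected
and bridgeless and does not decrease the oriented diameter. -/
theorem subdivide_oriented_diam_ge {V : Type*} [Fintype V]
    (G : SimpleGraph V) (u v : V) (huv : G.Adj u v)
    (hconn : G.Connected) (hbridgeless : IsBridgeless G) :
    (subdivide G u v).Connected ∧ IsBridgeless (subdivide G u v) ∧
      orientedDiam G ≤ orientedDiam (subdivide G u v) := by
  refine ⟨subdivide_connected huv hconn, subdivide_bridgeless huv hbridgeless, ?_⟩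
  have e1 : orientedDiam G =
      sInf {d | ∃ R : V → V → Prop, IsOrientation G R ∧ IsStrong R ∧ diamOr R = d} := rfl
  have e2 : orientedDiam (subdivide G u v) =
      sInf {d | ∃ R' : Option V → Option V → Prop,
        IsOrientation (subdivide G u v) R' ∧ IsStrong R' ∧ diamOr R' = d} := rfl
  rw [e1, e2]
  by_cases hne' : {d | ∃ R' : Option V → Option V → Prop,
      IsOrientation (subdivide G u v) R' ∧ IsStrong R' ∧ diamOr R' = d}.Nonempty
  · obtain ⟨R', hoR', hsR', hdR'⟩ := Nat.sInf_mem hne'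
    have h1 : diamOr (collapseRel G u v R') ∈
        {d | ∃ R : V → V → Prop, IsOrientation G R ∧ IsStrong R ∧ diamOr R = d} :=
      ⟨_, collapse_orientation huv hoR' hsR', collapse_strong huv hoR' hsR', rfl⟩
    calc sInf {d | ∃ R : V → V → Prop, IsOrientation G R ∧ IsStrong R ∧ diamOr R = d}
        ≤ diamOr (collapseRel G u v R') := Nat.sInf_le h1
      _ ≤ diamOr R' := collapse_diam huv hoR' hsR'
      _ = _ := hdR'
  · have hSe : ¬ {d | ∃ R : V → V → Prop,
        IsOrientation G R ∧ IsStrong R ∧ diamOr R = d}.Nonempty := by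
      rintro ⟨d, R, hoR, hsR, hdR⟩
      exact hne' ⟨diamOr (expandRel G u v R), _, expand_orientation huv hoR,
        expand_strong huv hoR hsR, rfl⟩
    rw [Set.not_nonempty_iff_eq_empty] at hne' hSe
    rw [hSe, hne', Nat.sInf_empty]
end

section
/- Let G be a connected bridgeless graph, v a vertex of G, and G' the graph obtained from G by adding two new vertices v', v'' together with the edges vv', v'v'', v''v (a pendant triangle at v). Then G' is connected and bridgeless, and the oriented diameter of G' is at least the oriented diameter of G. -/
open SimpleGraph

variable {V : Type*}

inductive DW (R : V → V → Prop) : V → V → ℕ → Prop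
  | refl (u : V) : DW R u u 0
  | head {u v w : V} {n : ℕ} : R u v → DW R v w n → DW R u w (n + 1)

lemma hasDirWalk_of_dw {R : V → V → Prop} {u w : V} {n : ℕ} (h : DW R u w n) :
    HasDirWalk R u w n := by
  induction h with
  | refl u => exact ⟨fun _ => u, rfl, rfl, fun i => i.elim0⟩
  | @head a b c n hab _ ih =>
    obtain ⟨f, hf0, hfl, hfs⟩ := ih
    refine ⟨Fin.cases a f, by simp, ?_, ?_⟩
    · show Fin.cases a f (Fin.last (n+1)) = c
      have : Fin.last (n+1) = Fin.succ (Fin.last n) := rfl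
      rw [this]
      rw [Fin.cases_succ]; exact hfl
    · intro i
      induction i using Fin.cases with
      | zero =>
        show R (Fin.cases a f (Fin.castSucc 0)) (Fin.cases a f (Fin.succ 0))
        rw [Fin.castSucc_zero, Fin.cases_zero, Fin.cases_succ, hf0]
        exact hab
      | succ j =>
        show R (Fin.cases a f (Fin.castSucc (Fin.succ j))) (Fin.cases a f (Fin.succ (Fin.succ j)))
        have h1 : Fin.castSucc (Fin.succ j) = Fin.succ (Fin.castSucc j) := by
          rfl
        rw [h1]
        simpa [Fin.cases_succ] using hfs j

lemma dw_of_hasDirWalk {R : V → V → Prop} {u w : V} {n : ℕ} (h : HasDirWalk R u w n) :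
    DW R u w n := by
  induction n generalizing u with
  | zero =>
    obtain ⟨f, hf0, hfl, _⟩ := h
    have : u = w := by rw [← hf0, ← hfl]; rfl
    rw [this]; exact DW.refl w
  | succ n ih =>
    obtain ⟨f, hf0, hfl, hfs⟩ := h
    have h1 : R u (f 1) := by
      have := hfs 0
      simpa [hf0] using this
    refine DW.head h1 (ih ⟨fun i => f i.succ, rfl, ?_, ?_⟩)
    · show f (Fin.succ (Fin.last n)) = w
      have : Fin.succ (Fin.last n) = Fin.last (n+1) := rfl
      rw [this]; exact hfl
    · intro i
      have := hfs i.succ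
      rwa [← Fin.succ_castSucc] at this

lemma DW.trans {R : V → V → Prop} {a b c : V} {m n : ℕ}
    (h1 : DW R a b m) (h2 : DW R b c n) : DW R a c (m + n) := by
  induction h1 with
  | refl => simpa using h2
  | head hab _ ih =>
    have := DW.head hab (ih h2)
    simpa [Nat.add_right_comm] using this

lemma DW.mapArcs {W : Type*} {R : V → V → Prop} {R' : W → W → Prop} {g : V → W}
    (hg : ∀ a b, R a b → R' (g a) (g b)) {a b : V} {n : ℕ} (h : DW R a b n) :
    DW R' (g a) (g b) n := by
  induction h with
  | refl => exact DW.refl _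
  | head hab _ ih => exact DW.head (hg _ _ hab) ih

lemma DW.project {W : Type*} {R : V → V → Prop} {R' : W → W → Prop} {g : V → W}
    (hg : ∀ a b, R a b → g a = g b ∨ R' (g a) (g b)) {a b : V} {n : ℕ} (h : DW R a b n) :
    ∃ m ≤ n, DW R' (g a) (g b) m := by
  induction h with
  | refl => exact ⟨0, le_refl _, DW.refl _⟩
  | head hab _ ih =>
    obtain ⟨m, hm, hdw⟩ := ih
    rcases hg _ _ hab with he | hr
    · exact ⟨m, hm.trans (Nat.le_succ _), he ▸ hdw⟩
    · exact ⟨m + 1, Nat.succ_le_succ hm, DW.head hr hdw⟩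

section Aux
variable {G : SimpleGraph V} {v : V}

lemma pt_adj_inl_inl {x y : V} :
    (pendantTriangle G v).Adj (Sum.inl x) (Sum.inl y) ↔ G.Adj x y := by
  constructor
  · rintro ⟨-, h | h⟩
    · exact h
    · exact h.symm
  · intro h
    exact ⟨by simp [h.ne], Or.inl h⟩

lemma pt_adj_inl_inr {x : V} {i : Fin 2} :
    (pendantTriangle G v).Adj (Sum.inl x) (Sum.inr i) ↔ x = v := by
  constructor
  · rintro ⟨-, h | h⟩
    · exact h
    · exact h.elim
  · intro h
    exact ⟨by simp, Or.inl h⟩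

lemma pt_adj_inr_inr {i j : Fin 2} :
    (pendantTriangle G v).Adj (Sum.inr i) (Sum.inr j : V ⊕ Fin 2) ↔ i ≠ j := by
  constructor
  · rintro ⟨hne, h | h⟩
    · exact h
    · exact h.symm
  · intro h
    exact ⟨by simp [h], Or.inl h⟩

lemma pt_adj_cases {a b : V ⊕ Fin 2} (h : (pendantTriangle G v).Adj a b) :
    (∃ x y, a = Sum.inl x ∧ b = Sum.inl y ∧ G.Adj x y) ∨
    (∃ i, a = Sum.inl v ∧ b = Sum.inr i) ∨
    (∃ i, a = Sum.inr i ∧ b = Sum.inl v) ∨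
    (∃ i j, i ≠ j ∧ a = Sum.inr i ∧ b = Sum.inr j) := by
  rcases a with x | i <;> rcases b with y | j
  · exact Or.inl ⟨x, y, rfl, rfl, pt_adj_inl_inl.1 h⟩
  · rw [pt_adj_inl_inr] at h
    exact Or.inr (Or.inl ⟨j, by rw [h], rfl⟩)
  · rw [SimpleGraph.adj_comm, pt_adj_inl_inr] at h
    exact Or.inr (Or.inr (Or.inl ⟨i, rfl, by rw [h]⟩))
  · rw [pt_adj_inr_inr] at h
    exact Or.inr (Or.inr (Or.inr ⟨i, j, h, rfl, rfl⟩))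

/-- The inclusion hom `G →g pendantTriangle G v`. -/
def ptHom (G : SimpleGraph V) (v : V) : G →g pendantTriangle G v :=
  ⟨Sum.inl, fun h => pt_adj_inl_inl.2 h⟩

end Aux

/-- Attaching a pendant triangle at a vertex of a connected bridgeless graph
keeps it connected and bridgeless and does not decrease the oriented diameter. -/
theorem pendantTriangle_oriented_diam_ge {V : Type*} [Fintype V]
    (G : SimpleGraph V) (v : V)
    (hconn : G.Connected) (hbridgeless : IsBridgeless G) :
    (pendantTriangle G v).Connected ∧ IsBridgeless (pendantTriangle G v) ∧
      orientedDiam G ≤ orientedDiam (pendantTriangle G v) := by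
  have h1 : (pendantTriangle G v).Adj (Sum.inl v) (Sum.inr 0) := pt_adj_inl_inr.2 rfl
  have h2 : (pendantTriangle G v).Adj (Sum.inr 0) (Sum.inr 1 : V ⊕ Fin 2) :=
    pt_adj_inr_inr.2 (by decide)
  have h3 : (pendantTriangle G v).Adj (Sum.inr 1) (Sum.inl v) := (pt_adj_inl_inr.2 rfl).symm
  have hr : ∀ a : V ⊕ Fin 2, (pendantTriangle G v).Reachable a (Sum.inl v) := by
    rintro (x | i)
    · exact Reachable.map (ptHom G v) (hconn.preconnected x v)
    · exact ((pt_adj_inl_inr.2 rfl : (pendantTriangle G v).Adj (Sum.inl v) (Sum.inr i)).symm).reachable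
  refine ⟨⟨fun a b => (hr a).trans (hr b).symm⟩, ?_, ?_⟩
  · -- Bridgeless
    intro e hbr
    induction e using Sym2.ind with
    | _ a b =>
      have hadj : (pendantTriangle G v).Adj a b := by
        by_contra hna
        rw [isBridge_iff, deleteEdges_eq_self.2 (by simpa using hna)] at hbr
        exact hbr ((hr a).trans (hr b).symm)
      have hcyc := (isBridge_iff_forall_cycle_notMem hadj).1 hbr
      set c : (pendantTriangle G v).Walk (Sum.inl v) (Sum.inl v) :=
        Walk.cons h1 (Walk.cons h2 (Walk.cons h3 Walk.nil)) with hc_def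
      have hc : c.IsCycle := by
        simp [hc_def, Walk.isCycle_def, Walk.isTrail_def]
      have hedges : c.edges = [s(Sum.inl v, Sum.inr 0), s(Sum.inr 0, Sum.inr 1),
          s(Sum.inr 1, Sum.inl v)] := by
        simp [hc_def]
      have h01 : ∀ i : Fin 2, i = 0 ∨ i = 1 := by decide
      have htri : ∀ i : Fin 2, s(Sum.inl v, (Sum.inr i : V ⊕ Fin 2)) ∈ c.edges := by
        intro i
        rcases h01 i with rfl | rfl
        · rw [hedges]; simp
        · rw [hedges]
          have : s(Sum.inl v, (Sum.inr 1 : V ⊕ Fin 2)) = s(Sum.inr 1, Sum.inl v) :=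
            Sym2.eq_swap
          rw [this]; simp
      rcases pt_adj_cases hadj with ⟨x, y, rfl, rfl, hxy⟩ | ⟨i, rfl, rfl⟩ |
        ⟨i, rfl, rfl⟩ | ⟨i, j, hij, rfl, rfl⟩
      · have hnb := hbridgeless s(x, y)
        rw [isBridge_iff_forall_cycle_notMem hxy] at hnb
        push_neg at hnb
        obtain ⟨w, p, hp, hmem⟩ := hnb
        have hpc := hp.map (f := ptHom G v) Sum.inl_injective
        refine hcyc (p.map (ptHom G v)) hpc ?_
        rw [Walk.edges_map]
        have : s(Sum.inl x, (Sum.inl y : V ⊕ Fin 2)) = Sym2.map (ptHom G v) s(x, y) := rfl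
        rw [this]
        exact List.mem_map_of_mem hmem
      · exact hcyc c hc (htri i)
      · refine hcyc c hc ?_
        rw [Sym2.eq_swap]
        exact htri i
      · refine hcyc c hc ?_
        rw [hedges]
        rcases h01 i with rfl | rfl <;> rcases h01 j with rfl | rfl <;>
          simp_all [Sym2.eq_swap]
  · -- oriented diameter
    rcases Set.eq_empty_or_nonempty {d | ∃ R : (V ⊕ Fin 2) → (V ⊕ Fin 2) → Prop,
        IsOrientation (pendantTriangle G v) R ∧ IsStrong R ∧ diamOr R = d} with hS | hS
    · -- no strong orientation of G' : then none of G either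
      have hSG : {d | ∃ R : V → V → Prop, IsOrientation G R ∧ IsStrong R ∧ diamOr R = d} = ∅ := by
        rw [Set.eq_empty_iff_forall_notMem]
        rintro d ⟨R, hor, hstr, -⟩
        set R'' : (V ⊕ Fin 2) → (V ⊕ Fin 2) → Prop := fun a b =>
          match a, b with
          | Sum.inl x, Sum.inl y => R x y
          | Sum.inl x, Sum.inr i => x = v ∧ i = 0
          | Sum.inr i, Sum.inl x => i = 1 ∧ x = v
          | Sum.inr i, Sum.inr j => i = 0 ∧ j = 1 with hR''
        have h01 : ∀ i : Fin 2, i = 0 ∨ i = 1 := by decide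
        have e01 : R'' (Sum.inr 0) (Sum.inr 1) :=
          show (0 : Fin 2) = 0 ∧ (1 : Fin 2) = 1 from ⟨rfl, rfl⟩
        have e1v : R'' (Sum.inr 1) (Sum.inl v) :=
          show (1 : Fin 2) = 1 ∧ v = v from ⟨rfl, rfl⟩
        have ev0 : R'' (Sum.inl v) (Sum.inr 0) :=
          show v = v ∧ (0 : Fin 2) = 0 from ⟨rfl, rfl⟩
        have hor'' : IsOrientation (pendantTriangle G v) R'' := by
          refine ⟨?_, ?_, ?_⟩
          · rintro (x | i) (y | j) h
            · exact pt_adj_inl_inl.2 (hor.1 x y h)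
            · exact pt_adj_inl_inr.2 h.1
            · exact (pt_adj_inl_inr.2 h.2).symm
            · obtain ⟨hi, hj⟩ := h
              exact pt_adj_inr_inr.2 (by rw [hi, hj]; decide)
          · intro a b hadj
            rcases pt_adj_cases hadj with ⟨x, y, rfl, rfl, hxy⟩ | ⟨i, rfl, rfl⟩ |
              ⟨i, rfl, rfl⟩ | ⟨i, j, hij, rfl, rfl⟩
            · exact hor.2.1 x y hxy
            · rcases h01 i with rfl | rfl
              · exact Or.inl (show v = v ∧ (0 : Fin 2) = 0 from ⟨rfl, rfl⟩)
              · exact Or.inr (show (1 : Fin 2) = 1 ∧ v = v from ⟨rfl, rfl⟩)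
            · rcases h01 i with rfl | rfl
              · exact Or.inr (show v = v ∧ (0 : Fin 2) = 0 from ⟨rfl, rfl⟩)
              · exact Or.inl (show (1 : Fin 2) = 1 ∧ v = v from ⟨rfl, rfl⟩)
            · rcases h01 i with rfl | rfl <;> rcases h01 j with rfl | rfl
              · exact absurd rfl hij
              · exact Or.inl (show (0 : Fin 2) = 0 ∧ (1 : Fin 2) = 1 from ⟨rfl, rfl⟩)
              · exact Or.inr (show (0 : Fin 2) = 0 ∧ (1 : Fin 2) = 1 from ⟨rfl, rfl⟩)
              · exact absurd rfl hij
          · rintro (x | i) (y | j) ha hb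
            · exact hor.2.2 x y ha hb
            · exact absurd (ha.2 ▸ hb.1) (by decide)
            · exact absurd (ha.1 ▸ hb.2) (by decide)
            · exact absurd (ha.1 ▸ hb.2) (by decide)
        have hmap : ∀ a b : V, R a b → R'' (Sum.inl a) (Sum.inl b) := fun a b h => h
        have hto : ∀ a : V ⊕ Fin 2, ∃ n, DW R'' a (Sum.inl v) n := by
          rintro (x | i)
          · obtain ⟨n, hw⟩ := hstr x v
            exact ⟨n, (dw_of_hasDirWalk hw).mapArcs hmap⟩
          · have w1v : DW R'' (Sum.inr 1) (Sum.inl v) 1 :=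
              DW.head (v := Sum.inl v) e1v (DW.refl _)
            rcases h01 i with rfl | rfl
            · exact ⟨2, DW.head (v := Sum.inr 1) e01 w1v⟩
            · exact ⟨1, w1v⟩
        have hfrom : ∀ b : V ⊕ Fin 2, ∃ n, DW R'' (Sum.inl v) b n := by
          rintro (x | i)
          · obtain ⟨n, hw⟩ := hstr v x
            exact ⟨n, (dw_of_hasDirWalk hw).mapArcs hmap⟩
          · have wv0 : DW R'' (Sum.inl v) (Sum.inr 0) 1 :=
              DW.head (v := Sum.inr 0) ev0 (DW.refl _)
            rcases h01 i with rfl | rfl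
            · exact ⟨1, wv0⟩
            · exact ⟨2, DW.head (v := Sum.inr 0) ev0
                (DW.head (v := Sum.inr 1) e01 (DW.refl _))⟩
        have hstr'' : IsStrong R'' := by
          intro a b
          obtain ⟨m, hma⟩ := hto a
          obtain ⟨n, hnb⟩ := hfrom b
          exact ⟨m + n, hasDirWalk_of_dw (hma.trans hnb)⟩
        have : diamOr R'' ∈ ({} : Set ℕ) := by
          rw [← hS]
          exact ⟨R'', hor'', hstr'', rfl⟩
        simp at this
      unfold orientedDiam
      rw [hSG, hS]
    · obtain ⟨R', hor', hstr', hd'⟩ := Nat.sInf_mem hS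
      set R : V → V → Prop := fun x y => R' (Sum.inl x) (Sum.inl y) with hRdef
      have horR : IsOrientation G R := by
        refine ⟨fun x y h => pt_adj_inl_inl.1 (hor'.1 _ _ h),
          fun x y h => hor'.2.1 _ _ (pt_adj_inl_inl.2 h),
          fun x y ha hb => hor'.2.2 _ _ ha hb⟩
      set π : V ⊕ Fin 2 → V := Sum.elim id (fun _ => v) with hπ
      have hg : ∀ a b : V ⊕ Fin 2, R' a b → π a = π b ∨ R (π a) (π b) := by
        intro a b h
        rcases pt_adj_cases (hor'.1 _ _ h) with ⟨x, y, rfl, rfl, -⟩ | ⟨i, rfl, rfl⟩ |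
          ⟨i, rfl, rfl⟩ | ⟨i, j, -, rfl, rfl⟩
        · exact Or.inr h
        · exact Or.inl rfl
        · exact Or.inl rfl
        · exact Or.inl rfl
      have hstrR : IsStrong R := by
        intro u w
        obtain ⟨n, hw⟩ := hstr' (Sum.inl u) (Sum.inl w)
        obtain ⟨m, -, hdw⟩ := (dw_of_hasDirWalk hw).project hg
        exact ⟨m, hasDirWalk_of_dw hdw⟩
      have hdd : ∀ u w : V, ddist R u w ≤ ddist R' (Sum.inl u) (Sum.inl w) := by
        intro u w
        have hne : {n | HasDirWalk R' (Sum.inl u) (Sum.inl w) n}.Nonempty := hstr' _ _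
        have hmem := Nat.sInf_mem hne
        obtain ⟨m, hm, hdw⟩ := (dw_of_hasDirWalk hmem).project hg
        exact le_trans (Nat.sInf_le (hasDirWalk_of_dw hdw)) hm
      have hdiam : diamOr R ≤ diamOr R' := by
        apply Finset.sup_le
        rintro ⟨u, w⟩ -
        refine le_trans (max_le_max (hdd u w) (hdd w u)) ?_
        exact Finset.le_sup (f := fun p : (V ⊕ Fin 2) × (V ⊕ Fin 2) => theta R' p.1 p.2)
          (Finset.mem_univ (Sum.inl u, Sum.inl w))
      calc orientedDiam G ≤ diamOr R := Nat.sInf_le ⟨R, horR, hstrR, rfl⟩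
        _ ≤ diamOr R' := hdiam
        _ = orientedDiam (pendantTriangle G v) := hd'
end

section
/- Let (G,D) be a standard pair and let H₀ be an alternative subgraph of G with r₀ = |V(H₀) ∩ D| dominating vertices. Then |V(H₀)| = 3r₀, every dominating vertex of H₀ has degree exactly 2 in H₀, and any strong orientation H⃗₀ of H₀ satisfies diam(H⃗₀) ≤ 3r₀ − 1. -/
open SimpleGraph

variable {V : Type*}

lemma shorten_aux {V : Type*} {R : V → V → Prop} {n : ℕ} {u v : V}
    (f : Fin (n+1) → V) (hf0 : f 0 = u) (hfl : f (Fin.last n) = v)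
    (harc : ∀ i : Fin n, R (f i.castSucc) (f i.succ))
    {i j : ℕ} (hij : i < j) (hjn : j ≤ n)
    (hfij : f ⟨i, by omega⟩ = f ⟨j, by omega⟩) :
    HasDirWalk R u v (n - (j - i)) := by
  set d := j - i with hd
  have hdpos : 0 < d := by omega
  have hdn : d ≤ n := by omega
  set m := n - d with hm
  have harc' : ∀ k, (h : k < n) → R (f ⟨k, by omega⟩) (f ⟨k+1, by omega⟩) := by
    intro k h
    have := harc ⟨k, h⟩
    simpa [Fin.castSucc, Fin.succ, Fin.castAdd, Fin.castLE] using this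
  refine ⟨fun k => if k.val ≤ i then f ⟨k.val, by omega⟩ else f ⟨k.val + d, by omega⟩,
    ?_, ?_, ?_⟩
  · simp only [Fin.val_zero, Nat.zero_le, if_pos]
    rw [← hf0]; congr 1
  · have hmi : i ≤ m := by omega
    simp only [Fin.val_last]
    by_cases h : m ≤ i
    · have hmi' : m = i := le_antisymm h hmi
      have hjn' : j = n := by omega
      rw [if_pos h]
      rw [← hfl]
      rw [show (⟨m, by omega⟩ : Fin (n+1)) = ⟨i, by omega⟩ from by simp [hmi'], hfij]
      congr 1
      simp [Fin.last, hjn']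
    · rw [if_neg h]
      rw [← hfl]
      congr 1
      simp [Fin.last]; omega
  · intro k
    have hk : k.val < m := k.isLt
    simp only [Fin.coe_castSucc, Fin.val_succ]
    by_cases h1 : k.val + 1 ≤ i
    · rw [if_pos (by omega), if_pos h1]
      exact harc' k.val (by omega)
    · by_cases h2 : k.val ≤ i
      · have hki : k.val = i := by omega
        have hjltn : j < n := by omega
        rw [if_pos h2, if_neg h1]
        rw [show (⟨k.val, by omega⟩ : Fin (n+1)) = ⟨i, by omega⟩ from by simp [hki], hfij]
        rw [show (⟨k.val + 1 + d, by omega⟩ : Fin (n+1)) = ⟨j + 1, by omega⟩ from by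
          simp; omega]
        exact harc' j hjltn
      · rw [if_neg h2, if_neg h1]
        rw [show (⟨k.val + 1 + d, by omega⟩ : Fin (n+1)) = ⟨k.val + d + 1, by omega⟩ from by
          simp; omega]
        exact harc' (k.val + d) (by omega)

lemma shorten {V : Type*} {R : V → V → Prop} {W : Set V}
    (hR : ∀ a b, R a b → a ∈ W ∧ b ∈ W) (hW : W.Finite) :
    ∀ n u v, u ∈ W → HasDirWalk R u v n → ∃ m, m + 1 ≤ W.ncard ∧ HasDirWalk R u v m := by
  intro n
  induction n using Nat.strong_induction_on with
  | _ n IH =>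
    intro u v hu hw
    by_cases hle : n + 1 ≤ W.ncard
    · exact ⟨n, hle, hw⟩
    · obtain ⟨f, hf0, hfl, harc⟩ := hw
      have hmem : ∀ i : Fin (n+1), f i ∈ W := by
        intro ⟨k, hk⟩
        match k with
        | 0 =>
          simpa [show (⟨0, hk⟩ : Fin (n+1)) = 0 from rfl, hf0] using hu
        | Nat.succ k' =>
          have hk' : k' < n := by omega
          have := (hR _ _ (harc ⟨k', hk'⟩)).2
          convert this using 2
          exact Fin.ext rfl
      -- pigeonhole
      have hcard : hW.toFinset.card < (Finset.univ : Finset (Fin (n+1))).card := by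
        rw [Finset.card_univ, Fintype.card_fin]
        rw [← Set.ncard_eq_toFinset_card _ hW]
        omega
      obtain ⟨i, -, j, -, hne, heq⟩ :=
        Finset.exists_ne_map_eq_of_card_lt_of_maps_to hcard
          (fun x _ => hW.mem_toFinset.2 (hmem x))
      have hvalne : i.val ≠ j.val := fun h => hne (Fin.ext h)
      rcases Nat.lt_or_ge i.val j.val with h | h
      · have := shorten_aux f hf0 hfl harc h (by omega)
          (by rw [show (⟨i.val, by omega⟩ : Fin (n+1)) = i from rfl,
                 show (⟨j.val, by omega⟩ : Fin (n+1)) = j from rfl]; exact heq)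
        exact IH _ (by omega) u v hu this
      · have hji : j.val < i.val := by omega
        have := shorten_aux f hf0 hfl harc hji (by omega)
          (by rw [show (⟨j.val, by omega⟩ : Fin (n+1)) = j from rfl,
                 show (⟨i.val, by omega⟩ : Fin (n+1)) = i from rfl]; exact heq.symm)
        exact IH _ (by omega) u v hu this

/-- An alternative subgraph `H₀` of a standard pair `(G, D)` with
`r₀ = |V(H₀) ∩ D|` has exactly `3r₀` vertices, each dominating vertex has degree exactly
2 in `H₀`, and any strong orientation of `H₀` has diameter at most `3r₀ - 1`. -/
theorem alternative_basic_properties {V : Type*} [Fintype V]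
    (G : SimpleGraph V) (D : Set V) (hstd : IsStandardPair G D)
    (H₀ : G.Subgraph) (halt : IsAlternative G D H₀)
    (r₀ : ℕ) (hr₀ : (H₀.verts ∩ D).ncard = r₀) :
    H₀.verts.ncard = 3 * r₀ ∧
    (∀ x ∈ H₀.verts ∩ D, (H₀.neighborSet x).ncard = 2) ∧
    (∀ R : V → V → Prop, IsOrientation H₀.spanningCoe R → IsStrongOn R H₀.verts →
      ∀ u ∈ H₀.verts, ∀ v ∈ H₀.verts, theta R u v ≤ 3 * r₀ - 1) := by
  classical
  obtain ⟨hbr, hindep, huniq, htri⟩ := hstd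
  obtain ⟨hb0, hne, hdeg2, hdom⟩ := halt
  have hnbr : ∀ x ∈ H₀.verts ∩ D, ∃ a b : V, a ≠ b ∧ a ∉ D ∧ b ∉ D ∧
      H₀.neighborSet x = {a, b} := by
    intro x hx
    obtain ⟨a, b, hab, haD, hbD, hxa, hxb, hmax⟩ := hdeg2 x hx
    refine ⟨a, b, hab, haD, hbD, ?_⟩
    ext y
    simp only [SimpleGraph.Subgraph.mem_neighborSet, Set.mem_insert_iff, Set.mem_singleton_iff]
    constructor
    · intro hy
      by_cases hyD : y ∈ D
      · exact absurd hy.adj_sub (hindep x hx.2 y hyD)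
      · exact hmax y hyD hy
    · rintro (rfl | rfl) <;> assumption
  have part2 : ∀ x ∈ H₀.verts ∩ D, (H₀.neighborSet x).ncard = 2 := by
    intro x hx
    obtain ⟨a, b, hab, -, -, hset⟩ := hnbr x hx
    rw [hset, Set.ncard_pair hab]
  set S : Set V := H₀.verts ∩ D with hS
  set Q : V → Set V := fun x => {y | y ∉ D ∧ H₀.Adj x y} with hQdef
  have hQcard : ∀ x ∈ S, (Q x).ncard = 2 := by
    intro x hx
    obtain ⟨a, b, hab, haD, hbD, hset⟩ := hnbr x hx
    have : Q x = {a, b} := by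
      ext y
      constructor
      · rintro ⟨hyD, hadj⟩
        have : y ∈ H₀.neighborSet x := hadj
        rw [hset] at this
        exact this
      · rintro (rfl | rfl)
        · have ha : y ∈ H₀.neighborSet x := by rw [hset]; left; rfl
          exact ⟨haD, ha⟩
        · have hb : y ∈ H₀.neighborSet x := by rw [hset]; right; rfl
          exact ⟨hbD, hb⟩
    rw [this, Set.ncard_pair hab]
  have hTQ : ∀ y, y ∈ H₀.verts \ D ↔ ∃ x ∈ S, y ∈ Q x := by
    intro y
    constructor
    · rintro ⟨hyv, hyD⟩
      obtain ⟨x, hx, hadj⟩ := hdom y hyv hyD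
      exact ⟨x, hx, hyD, hadj⟩
    · rintro ⟨x, hx, hyD, hadj⟩
      exact ⟨hadj.snd_mem, hyD⟩
  have hdisj : ∀ x ∈ S, ∀ x' ∈ S, x ≠ x' → Disjoint (Q x) (Q x') := by
    intro x hx x' hx' hne
    rw [Set.disjoint_left]
    rintro y ⟨hyD, hadj⟩ ⟨-, hadj'⟩
    obtain ⟨w, hw, huw⟩ := huniq y hyD
    exact hne ((huw x ⟨hx.2, hadj.adj_sub⟩).trans (huw x' ⟨hx'.2, hadj'.adj_sub⟩).symm)
  have hSfin : S.Finite := Set.toFinite _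
  have hTfin : (H₀.verts \ D).Finite := Set.toFinite _
  have hQfin : ∀ x, (Q x).Finite := fun x => Set.toFinite _
  have hT : (H₀.verts \ D).ncard = 2 * r₀ := by
    have hbU : hTfin.toFinset = hSfin.toFinset.biUnion (fun x => (hQfin x).toFinset) := by
      ext y
      simp only [Set.Finite.mem_toFinset, Finset.mem_biUnion, hTQ y]
    have hdisj' : ∀ x ∈ hSfin.toFinset, ∀ x' ∈ hSfin.toFinset, x ≠ x' →
        Disjoint ((hQfin x).toFinset) ((hQfin x').toFinset) := by
      intro x hx x' hx' hne
      rw [Set.Finite.disjoint_toFinset]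
      exact hdisj x (hSfin.mem_toFinset.1 hx) x' (hSfin.mem_toFinset.1 hx') hne
    have hterm : ∀ x ∈ hSfin.toFinset, ((hQfin x).toFinset).card = 2 := by
      intro x hx
      rw [← Set.ncard_eq_toFinset_card _ (hQfin x)]
      exact hQcard x (hSfin.mem_toFinset.1 hx)
    rw [Set.ncard_eq_toFinset_card _ hTfin, hbU, Finset.card_biUnion hdisj',
      Finset.sum_congr rfl hterm, Finset.sum_const, smul_eq_mul,
      ← Set.ncard_eq_toFinset_card _ hSfin]
    rw [show S.ncard = r₀ from hr₀, Nat.mul_comm]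
  have hsplit : H₀.verts = S ∪ (H₀.verts \ D) := by
    ext y
    by_cases hyD : y ∈ D
    · simp [hS, Set.mem_inter_iff, Set.mem_diff, hyD]
    · simp [hS, Set.mem_inter_iff, Set.mem_diff, hyD]
  have part1 : H₀.verts.ncard = 3 * r₀ := by
    rw [hsplit, Set.ncard_union_eq (Set.disjoint_left.2 fun y hy hy' => hy'.2 hy.2)
      hSfin hTfin, show S.ncard = r₀ from hr₀, hT]
    ring
  refine ⟨part1, part2, ?_⟩
  intro R hor hstr u hu v hv
  have hR : ∀ a b, R a b → a ∈ H₀.verts ∧ b ∈ H₀.verts := by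
    intro a b hab
    have h : H₀.Adj a b := hor.1 a b hab
    exact ⟨h.fst_mem, h.snd_mem⟩
  have key : ∀ w, w ∈ H₀.verts → ∀ z, z ∈ H₀.verts → ddist R w z ≤ 3 * r₀ - 1 := by
    intro w hw z hz
    obtain ⟨n, hn⟩ := hstr w hw z hz
    obtain ⟨m, hm1, hm2⟩ := shorten hR (Set.toFinite _) n w z hw hn
    rw [part1] at hm1
    have hle : ddist R w z ≤ m := Nat.sInf_le hm2
    omega
  rw [theta, max_le_iff]
  rw [hsplit] at hu hv
  exact ⟨key u (hsplit ▸ hu) v (hsplit ▸ hv), key v (hsplit ▸ hv) u (hsplit ▸ hu)⟩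
end
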